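/- Per-coordinate subset-mean deviation bound: let h_1,...,h_n ∈ R^K with mean h̄, H ⊆ [n] with |H| = n−f, and h̄_H the mean over H. Then for every coordinate k, ([h̄_H]_k − [h̄]_k)² ≤ (f/(n−f)) · (1/n)∑_{i=1}^n ([h_i]_k − [h̄]_k)², using that ∑_{i=1}^n ([h_i]_k − [h̄]_k)² ≥ (n(n−f)/f)([h̄_H]_k − [h̄]_k)². -/

import Mathlib

/-- Per-coordinate subset-mean deviation bound: for a subset `H` of size `n - f`, the
squared deviation of the subset mean from the global mean in each coordinate is at most
`(f/(n-f))` times the per-coordinate empirical variance. -/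
theorem percoord_subset_mean_bound {n K f : ℕ} (hf : 0 < f) (hfn : f < n)
    (h : Fin n → Fin K → ℝ) (H : Finset (Fin n)) (hH : H.card = n - f) :
    ∀ k, (((n - f : ℕ) : ℝ)⁻¹ * ∑ i ∈ H, h i k - (n : ℝ)⁻¹ * ∑ i, h i k) ^ 2
      ≤ ((f : ℝ) / ((n - f : ℕ) : ℝ)) *
          ((n : ℝ)⁻¹ * ∑ i, (h i k - (n : ℝ)⁻¹ * ∑ j, h j k) ^ 2) := by
  intro k
  set x : Fin n → ℝ := fun i => h i k - (n : ℝ)⁻¹ * ∑ j, h j k with hxdef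
  have hnpos : (0 : ℝ) < n := by exact_mod_cast hf.trans hfn
  have hmpos : 0 < n - f := Nat.sub_pos_of_lt hfn
  have hm : (0 : ℝ) < ((n - f : ℕ) : ℝ) := by exact_mod_cast hmpos
  have hfpos : (0 : ℝ) < f := by exact_mod_cast hf
  -- total sum of x is zero
  have hsum0 : ∑ i, x i = 0 := by
    simp only [hxdef, Finset.sum_sub_distrib, Finset.sum_const, Finset.card_univ,
      Fintype.card_fin, nsmul_eq_mul]
    field_simp
    ring
  -- complement card
  have hcardT : (Hᶜ : Finset (Fin n)).card = f := by
    have := Finset.card_compl H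
    rw [hH] at this
    simp [this, Nat.sub_sub_self hfn.le]
  have hsplit : ∑ i ∈ H, x i + ∑ i ∈ Hᶜ, x i = 0 := by
    rw [Finset.sum_add_sum_compl]; exact hsum0
  set S : ℝ := ∑ i ∈ H, x i with hS
  have hTS : ∑ i ∈ Hᶜ, x i = -S := by linarith
  -- Cauchy–Schwarz on H and on complement
  have c1 : S ^ 2 ≤ ((n - f : ℕ) : ℝ) * ∑ i ∈ H, x i ^ 2 := by
    have := sq_sum_le_card_mul_sum_sq (s := H) (f := x)
    rwa [hH] at this
  have c2 : S ^ 2 ≤ (f : ℝ) * ∑ i ∈ Hᶜ, x i ^ 2 := by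
    have := sq_sum_le_card_mul_sum_sq (s := Hᶜ) (f := x)
    rw [hcardT, hTS] at this
    simpa [neg_sq] using this
  have hQsplit : ∑ i ∈ H, x i ^ 2 + ∑ i ∈ Hᶜ, x i ^ 2 = ∑ i, x i ^ 2 :=
    Finset.sum_add_sum_compl H _
  set Q : ℝ := ∑ i, x i ^ 2 with hQ
  have key : (n : ℝ) * S ^ 2 ≤ (f : ℝ) * ((n - f : ℕ) : ℝ) * Q := by
    have hn' : (n : ℝ) = (f : ℝ) + ((n - f : ℕ) : ℝ) := by
      have : f + (n - f) = n := Nat.add_sub_cancel' hfn.le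
      exact_mod_cast (by omega : n = f + (n - f))
    have a1 := mul_le_mul_of_nonneg_left c1 hfpos.le
    have a2 := mul_le_mul_of_nonneg_left c2 hm.le
    have a3 : (f : ℝ) * (((n - f : ℕ) : ℝ) * ∑ i ∈ H, x i ^ 2)
        + ((n - f : ℕ) : ℝ) * ((f : ℝ) * ∑ i ∈ Hᶜ, x i ^ 2)
        = (f : ℝ) * ((n - f : ℕ) : ℝ) * Q := by rw [← hQsplit]; ring
    rw [hn']
    nlinarith [a1, a2, a3]
  -- rewrite goal in terms of S and Q
  have hgoal : (((n - f : ℕ) : ℝ)⁻¹ * ∑ i ∈ H, h i k - (n : ℝ)⁻¹ * ∑ i, h i k)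
      = ((n - f : ℕ) : ℝ)⁻¹ * S := by
    rw [hS]
    simp only [hxdef, Finset.sum_sub_distrib, Finset.sum_const, hH, nsmul_eq_mul]
    field_simp
  rw [hgoal]
  have e1 : (((n - f : ℕ) : ℝ)⁻¹ * S) ^ 2 = S ^ 2 / ((n - f : ℕ) : ℝ) ^ 2 := by
    field_simp
  have e2 : (f : ℝ) / ((n - f : ℕ) : ℝ) * ((n : ℝ)⁻¹ * Q)
      = (f : ℝ) * Q / (((n - f : ℕ) : ℝ) * n) := by
    field_simp
  rw [e1, e2, div_le_div_iff₀ (by positivity) (by positivity)]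
  nlinarith [key, hm.le]
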